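/- If an optimal feasible schedule of the shared multi-processor instance exists, then there exists an optimal feasible schedule that is normal and non-preemptive. -/

import Mathlib

/-- A feasible schedule for a shared multi-processor instance: jobs `J` with
processing times `p`, `m` shared processors.  Each job `j` gets a shared
processor `mu j`, a finite set `iv j` of pairwise disjoint open bounded
subintervals of `(0,∞)` (represented by their endpoint pairs) on which `j`
executes on processor `mu j`, and a private completion time `c j ≥ 0` so that
`j` executes on its private processor exactly in `(0, c j)`.  The private time
plus the total length of the shared intervals equals `p j`, and intervals of
distinct jobs on a common shared processor are disjoint. -/
structure Schedule (J : Type) [Fintype J] [DecidableEq J] (m : ℕ) (p : J → ℝ) where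
  mu : J → Fin m
  iv : J → Finset (ℝ × ℝ)
  c : J → ℝ
  c_nonneg : ∀ j, 0 ≤ c j
  iv_valid : ∀ j, ∀ q ∈ iv j, 0 ≤ q.1 ∧ q.1 ≤ q.2
  iv_disjoint : ∀ j, ∀ q ∈ iv j, ∀ q' ∈ iv j, q ≠ q' → q.2 ≤ q'.1 ∨ q'.2 ≤ q.1
  total : ∀ j, c j + ∑ q ∈ iv j, (q.2 - q.1) = p j
  shared_disjoint : ∀ j j', j ≠ j' → mu j = mu j' →
    ∀ q ∈ iv j, ∀ q' ∈ iv j', q.2 ≤ q'.1 ∨ q'.2 ≤ q.1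

namespace Schedule

variable {J : Type} [Fintype J] [DecidableEq J] {m : ℕ} {p : J → ℝ}

/-- The overlap `t_j` of job `j`: total length of `(0, c j) ∩ ⋃ (iv j)`. -/
noncomputable def overlap (S : Schedule J m p) (j : J) : ℝ :=
  ∑ q ∈ S.iv j, max 0 (min (S.c j) q.2 - q.1)

/-- Total weighted overlap `Ω(S) = Σ_j w_j t_j`. -/
noncomputable def Omega (S : Schedule J m p) (w : J → ℝ) : ℝ :=
  ∑ j, w j * S.overlap j

/-- Completion time of `j` on its shared processor: the supremum of right
endpoints of its shared intervals, `0` if there are none. -/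
noncomputable def ftime (S : Schedule J m p) (j : J) : ℝ :=
  WithBot.unbotD 0 (((S.iv j).image Prod.snd).max)

/-- A schedule is normal if every job completes on the shared processor no
later than on its private processor. -/
def Normal (S : Schedule J m p) : Prop := ∀ j, S.ftime j ≤ S.c j

/-- A schedule is optimal if it maximizes the total weighted overlap. -/
def Optimal (S : Schedule J m p) (w : J → ℝ) : Prop :=
  ∀ S' : Schedule J m p, S'.Omega w ≤ S.Omega w

end Schedule

/-- A schedule is non-preemptive if each job uses at most one shared interval. -/
def Schedule.NonPreemptive {J : Type} [Fintype J] [DecidableEq J] {m : ℕ} {p : J → ℝ}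
    (S : Schedule J m p) : Prop :=
  ∀ j, (S.iv j).card ≤ 1

section NPAux

open MeasureTheory

lemma npaux_vol_Ioo (a b : ℝ) :
    (volume (Set.Ioo a b)).toReal = max 0 (b - a) := by
  rw [Real.volume_Ioo]
  rcases le_total (b - a) 0 with h | h
  · rw [ENNReal.ofReal_eq_zero.mpr h]
    simp [max_eq_left h]
  · rw [ENNReal.toReal_ofReal h, max_eq_right h]

lemma npaux_disj_Ioo {a b a' b' c c' : ℝ} (h : b ≤ a' ∨ b' ≤ a) :
    Disjoint (Set.Ioo a (min c b)) (Set.Ioo a' (min c' b')) := by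
  rcases h with h | h
  · rw [Set.disjoint_left]
    rintro x ⟨hx1, hx2⟩ ⟨hy1, hy2⟩
    have := lt_of_lt_of_le hx2 (min_le_right c b)
    linarith
  · rw [Set.disjoint_left]
    rintro x ⟨hx1, hx2⟩ ⟨hy1, hy2⟩
    have := lt_of_lt_of_le hy2 (min_le_right c' b')
    linarith

lemma npaux_le_max_unbot' (s : Finset ℝ) (a : ℝ) (h : a ∈ s) : a ≤ WithBot.unbotD 0 s.max := by
  have h1 := Finset.le_max h
  cases hM : s.max with
  | bot => rw [hM] at h1; exact absurd h1 (by simp)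
  | coe b => rw [hM] at h1; simpa using h1

lemma npaux_max_unbot'_le (s : Finset ℝ) (b : ℝ) (hb : 0 ≤ b) (h : ∀ a ∈ s, a ≤ b) :
    WithBot.unbotD 0 s.max ≤ b := by
  cases hM : s.max with
  | bot => simpa using hb
  | coe a =>
    simp only [WithBot.unbotD_coe]
    exact h a (Finset.mem_of_max hM)

variable {J : Type} [Fintype J] [DecidableEq J] {m : ℕ} {p : J → ℝ}

/-- `e j`: greatest value of `min (c j) q.2` over intervals of `j` (0 if none). -/
noncomputable def npE (S : Schedule J m p) (j : J) : ℝ :=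
  WithBot.unbotD 0 (((S.iv j).image fun q => min (S.c j) q.2).max)

/-- A strict total order on jobs: by `npE`, ties broken by an enumeration. -/
def npLT (S : Schedule J m p) (i j : J) : Prop :=
  npE S i < npE S j ∨
    (npE S i = npE S j ∧ ((Fintype.equivFin J) i : ℕ) < ((Fintype.equivFin J) j : ℕ))

open Classical in
/-- Jobs sharing `j`'s processor with positive overlap that precede `j`. -/
noncomputable def npB (S : Schedule J m p) (j : J) : Finset J :=
  Finset.univ.filter fun i => S.mu i = S.mu j ∧ 0 < S.overlap i ∧ npLT S i j

/-- Start time for `j` in the compacted schedule. -/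
noncomputable def npS (S : Schedule J m p) (j : J) : ℝ := ∑ i ∈ npB S j, S.overlap i

lemma npaux_overlap_nonneg (S : Schedule J m p) (j : J) : 0 ≤ S.overlap j :=
  Finset.sum_nonneg fun _ _ => le_max_left 0 _

lemma npaux_overlap_le (S : Schedule J m p) (j : J) : S.overlap j ≤ p j - S.c j := by
  have h := S.total j
  have h2 : S.overlap j ≤ ∑ q ∈ S.iv j, (q.2 - q.1) := by
    refine Finset.sum_le_sum fun q hq => ?_
    have hv := S.iv_valid j q hq
    have hmin := min_le_right (S.c j) q.2
    exact max_le (by linarith [hv.2]) (by linarith)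
  linarith

lemma npaux_e_nonneg (S : Schedule J m p) (j : J) : 0 ≤ npE S j := by
  unfold npE
  cases hM : ((S.iv j).image fun q => min (S.c j) q.2).max with
  | bot => simp
  | coe a =>
    simp only [WithBot.unbotD_coe]
    have hmem := Finset.mem_of_max hM
    rw [Finset.mem_image] at hmem
    obtain ⟨q, hq, rfl⟩ := hmem
    exact le_min (S.c_nonneg j) (le_trans (S.iv_valid j q hq).1 (S.iv_valid j q hq).2)

lemma npaux_e_le_c (S : Schedule J m p) (j : J) : npE S j ≤ S.c j := by
  refine npaux_max_unbot'_le _ _ (S.c_nonneg j) ?_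
  intro a ha
  rw [Finset.mem_image] at ha
  obtain ⟨q, _, rfl⟩ := ha
  exact min_le_left _ _

lemma npaux_min_le_e (S : Schedule J m p) (j : J) {q : ℝ × ℝ} (hq : q ∈ S.iv j) :
    min (S.c j) q.2 ≤ npE S j :=
  npaux_le_max_unbot' _ _ (Finset.mem_image_of_mem _ hq)

lemma npaux_klt_irrefl (S : Schedule J m p) (j : J) : ¬ npLT S j j := by
  simp [npLT]

lemma npaux_klt_trans (S : Schedule J m p) {i j k : J} (h1 : npLT S i j) (h2 : npLT S j k) :
    npLT S i k := by
  rcases h1 with h1 | ⟨h1, h1'⟩ <;> rcases h2 with h2 | ⟨h2, h2'⟩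
  · exact Or.inl (h1.trans h2)
  · exact Or.inl (h2 ▸ h1)
  · exact Or.inl (h1 ▸ h2)
  · exact Or.inr ⟨h1.trans h2, h1'.trans h2'⟩

lemma npaux_klt_le (S : Schedule J m p) {i j : J} (h : npLT S i j) : npE S i ≤ npE S j :=
  h.elim le_of_lt fun h' => le_of_eq h'.1

lemma npaux_klt_total (S : Schedule J m p) {i j : J} (h : i ≠ j) :
    npLT S i j ∨ npLT S j i := by
  rcases lt_trichotomy (npE S i) (npE S j) with h1 | h1 | h1
  · exact Or.inl (Or.inl h1)
  · have hne : ((Fintype.equivFin J) i : ℕ) ≠ ((Fintype.equivFin J) j : ℕ) := by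
      intro hv
      exact h ((Fintype.equivFin J).injective (Fin.val_injective hv))
    rcases lt_or_gt_of_ne hne with h2 | h2
    · exact Or.inl (Or.inr ⟨h1, h2⟩)
    · exact Or.inr (Or.inr ⟨h1.symm, h2⟩)
  · exact Or.inr (Or.inl h1)

lemma npaux_st_nonneg (S : Schedule J m p) (j : J) : 0 ≤ npS S j :=
  Finset.sum_nonneg fun i _ => npaux_overlap_nonneg S i

lemma npaux_j_not_mem (S : Schedule J m p) (j : J) : j ∉ npB S j := by
  simp [npB, npaux_klt_irrefl]

/-- Key packing bound: total overlap of jobs preceding (and including) `j`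
on its processor is at most `npE S j`, by a measure argument. -/
lemma npaux_key (S : Schedule J m p) (j : J) :
    ∑ i ∈ insert j (npB S j), S.overlap i ≤ npE S j := by
  classical
  set P : Finset J := insert j (npB S j) with hP
  have hmu : ∀ i ∈ P, S.mu i = S.mu j := by
    intro i hi
    rcases Finset.mem_insert.mp hi with rfl | hi
    · rfl
    · exact (Finset.mem_filter.mp hi).2.1
  have hee : ∀ i ∈ P, npE S i ≤ npE S j := by
    intro i hi
    rcases Finset.mem_insert.mp hi with rfl | hi
    · exact le_refl _
    · exact npaux_klt_le S (Finset.mem_filter.mp hi).2.2.2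
  set g : (Σ _ : J, ℝ × ℝ) → Set ℝ := fun x => Set.Ioo x.2.1 (min (S.c x.1) x.2.2) with hg
  set F : Finset (Σ _ : J, ℝ × ℝ) := P.sigma (fun i => S.iv i) with hF
  have hsum1 : ∑ i ∈ P, S.overlap i = ∑ x ∈ F, (volume (g x)).toReal := by
    rw [hF, Finset.sum_sigma]
    exact Finset.sum_congr rfl fun i _ =>
      Finset.sum_congr rfl fun q _ => (npaux_vol_Ioo q.1 (min (S.c i) q.2)).symm
  have hdisj : (↑F : Set (Σ _ : J, ℝ × ℝ)).PairwiseDisjoint g := by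
    rintro ⟨i, q⟩ hx ⟨i', q'⟩ hy hne
    rw [Finset.mem_coe, hF, Finset.mem_sigma] at hx hy
    show Disjoint (g ⟨i, q⟩) (g ⟨i', q'⟩)
    rcases eq_or_ne i i' with rfl | hii
    · have hqq : q ≠ q' := by rintro rfl; exact hne rfl
      exact npaux_disj_Ioo (S.iv_disjoint i q hx.2 q' hy.2 hqq)
    · exact npaux_disj_Ioo
        (S.shared_disjoint i i' hii ((hmu i hx.1).trans (hmu i' hy.1).symm) q hx.2 q' hy.2)
  have hmeas : ∀ x ∈ F, MeasurableSet (g x) := fun x _ => measurableSet_Ioo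
  have hsub : (⋃ x ∈ F, g x) ⊆ Set.Ioc 0 (npE S j) := by
    intro y hy
    simp only [Set.mem_iUnion] at hy
    obtain ⟨⟨i, q⟩, hx, hmem⟩ := hy
    rw [hF, Finset.mem_sigma] at hx
    obtain ⟨h1, h2⟩ := hmem
    constructor
    · exact lt_of_le_of_lt (S.iv_valid i q hx.2).1 h1
    · exact le_trans (le_of_lt h2) (le_trans (npaux_min_le_e S i hx.2) (hee i hx.1))
  have hENN : ∑ x ∈ F, volume (g x) ≤ ENNReal.ofReal (npE S j) := by
    rw [← measure_biUnion_finset hdisj hmeas]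
    calc volume (⋃ x ∈ F, g x) ≤ volume (Set.Ioc 0 (npE S j)) := measure_mono hsub
      _ = ENNReal.ofReal (npE S j) := by rw [Real.volume_Ioc, sub_zero]
  have hfin : ∀ x ∈ F, volume (g x) ≠ ⊤ := by
    intro x _
    rw [hg]
    simp [Real.volume_Ioo]
  rw [hsum1, ← ENNReal.toReal_sum hfin]
  exact ENNReal.toReal_le_of_le_ofReal (npaux_e_nonneg S j) hENN

lemma npaux_hst (S : Schedule J m p) (j : J) :
    npS S j + S.overlap j ≤ npE S j := by
  have h := npaux_key S j
  rw [Finset.sum_insert (npaux_j_not_mem S j)] at h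
  unfold npS
  linarith

lemma npaux_st_mono (S : Schedule J m p) {i j : J} (hmu : S.mu i = S.mu j)
    (hti : 0 < S.overlap i) (h : npLT S i j) :
    npS S i + S.overlap i ≤ npS S j := by
  classical
  have hsub : insert i (npB S i) ⊆ npB S j := by
    intro k hk
    rcases Finset.mem_insert.mp hk with rfl | hk
    · simp only [npB, Finset.mem_filter]
      exact ⟨Finset.mem_univ _, hmu, hti, h⟩
    · simp only [npB, Finset.mem_filter] at hk ⊢
      exact ⟨hk.1, hk.2.1.trans hmu, hk.2.2.1, npaux_klt_trans S hk.2.2.2 h⟩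
  calc npS S i + S.overlap i = ∑ k ∈ insert i (npB S i), S.overlap k := by
        rw [Finset.sum_insert (npaux_j_not_mem S i)]
        unfold npS
        ring
    _ ≤ npS S j :=
        Finset.sum_le_sum_of_subset_of_nonneg hsub fun k _ _ => npaux_overlap_nonneg S k

open Classical in
/-- The compacted schedule: each job gets a single interval of length equal to
its old overlap, packed in order of `npLT`. -/
noncomputable def npT (S : Schedule J m p) : Schedule J m p where
  mu := S.mu
  iv := fun j => if 0 < S.overlap j then {(npS S j, npS S j + S.overlap j)} else ∅
  c := fun j => p j - S.overlap j
  c_nonneg := fun j => by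
    have := npaux_overlap_le S j
    have := S.c_nonneg j
    show 0 ≤ p j - S.overlap j
    linarith
  iv_valid := by
    intro j q hq
    by_cases ht : 0 < S.overlap j
    · rw [if_pos ht, Finset.mem_singleton] at hq
      subst hq
      refine ⟨npaux_st_nonneg S j, ?_⟩
      show npS S j ≤ npS S j + S.overlap j
      linarith
    · rw [if_neg ht] at hq
      exact absurd hq (Finset.notMem_empty q)
  iv_disjoint := by
    intro j q hq q' hq' hne
    by_cases ht : 0 < S.overlap j
    · rw [if_pos ht, Finset.mem_singleton] at hq hq'
      exact absurd (hq.trans hq'.symm) hne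
    · rw [if_neg ht] at hq
      exact absurd hq (Finset.notMem_empty q)
  total := by
    intro j
    by_cases ht : 0 < S.overlap j
    · rw [if_pos ht, Finset.sum_singleton]
      ring
    · rw [if_neg ht, Finset.sum_empty]
      have h0 : S.overlap j = 0 := le_antisymm (not_lt.mp ht) (npaux_overlap_nonneg S j)
      rw [h0]; ring
  shared_disjoint := by
    intro j j' hne hmu q hq q' hq'
    by_cases ht : 0 < S.overlap j
    · by_cases ht' : 0 < S.overlap j'
      · rw [if_pos ht, Finset.mem_singleton] at hq
        rw [if_pos ht', Finset.mem_singleton] at hq'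
        subst hq; subst hq'
        rcases npaux_klt_total S hne with h | h
        · exact Or.inl (npaux_st_mono S hmu ht h)
        · exact Or.inr (npaux_st_mono S hmu.symm ht' h)
      · rw [if_neg ht'] at hq'
        exact absurd hq' (Finset.notMem_empty q')
    · rw [if_neg ht] at hq
      exact absurd hq (Finset.notMem_empty q)

lemma npaux_iv_pos (S : Schedule J m p) (j : J) (ht : 0 < S.overlap j) :
    (npT S).iv j = {(npS S j, npS S j + S.overlap j)} := if_pos ht

lemma npaux_iv_neg (S : Schedule J m p) (j : J) (ht : ¬ 0 < S.overlap j) :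
    (npT S).iv j = ∅ := if_neg ht

lemma npaux_end_le (S : Schedule J m p) (j : J) :
    npS S j + S.overlap j ≤ p j - S.overlap j := by
  have h2 := npaux_hst S j
  have h3 := npaux_e_le_c S j
  have h4 := npaux_overlap_le S j
  linarith

lemma npaux_overlap_T (S : Schedule J m p) (j : J) : (npT S).overlap j = S.overlap j := by
  unfold Schedule.overlap
  by_cases ht : 0 < S.overlap j
  · rw [npaux_iv_pos S j ht, Finset.sum_singleton]
    show max 0 (min (p j - S.overlap j) (npS S j + S.overlap j) - npS S j) = _
    rw [min_eq_right (npaux_end_le S j)]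
    have h1 : npS S j + S.overlap j - npS S j = S.overlap j := by ring
    rw [h1, max_eq_right (le_of_lt ht)]
    rfl
  · rw [npaux_iv_neg S j ht, Finset.sum_empty]
    exact (le_antisymm (not_lt.mp ht) (npaux_overlap_nonneg S j)).symm

lemma npaux_Omega (S : Schedule J m p) (w : J → ℝ) : (npT S).Omega w = S.Omega w := by
  unfold Schedule.Omega
  exact Finset.sum_congr rfl fun j _ => by rw [npaux_overlap_T]

lemma npaux_normal (S : Schedule J m p) : (npT S).Normal := by
  intro j
  unfold Schedule.ftime
  by_cases ht : 0 < S.overlap j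
  · rw [npaux_iv_pos S j ht, Finset.image_singleton, Finset.max_singleton,
      WithBot.unbotD_coe]
    show npS S j + S.overlap j ≤ p j - S.overlap j
    exact npaux_end_le S j
  · rw [npaux_iv_neg S j ht]
    simp only [Finset.image_empty, Finset.max_empty, WithBot.unbotD_bot]
    exact (npT S).c_nonneg j

lemma npaux_nonpre (S : Schedule J m p) : (npT S).NonPreemptive := by
  intro j
  by_cases ht : 0 < S.overlap j
  · rw [npaux_iv_pos S j ht]
    simp
  · rw [npaux_iv_neg S j ht]
    simp

end NPAux

/-- If an optimal feasible schedule exists, then there exists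
an optimal feasible schedule that is normal and non-preemptive. -/
theorem exists_optimal_normal_nonpreemptive
    {J : Type} [Fintype J] [DecidableEq J] {m : ℕ} (hm : 1 ≤ m)
    (p w : J → ℝ) (hp : ∀ j, 0 < p j) (hw : ∀ j, 0 < w j)
    (hex : ∃ S : Schedule J m p, S.Optimal w) :
    ∃ S' : Schedule J m p, S'.Optimal w ∧ S'.Normal ∧ S'.NonPreemptive := by
  obtain ⟨S, hS⟩ := hex
  refine ⟨npT S, ?_, npaux_normal S, npaux_nonpre S⟩
  intro S'
  rw [npaux_Omega]
  exact hS S'
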